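/- Under the assumptions below, the series Σ_{k=1}^∞ (1/k) · sin(πk/N) · ∫₀^{λₙ} (−f(t))^{k/N} dt/t converges absolutely, and its sum is strictly positive. -/

import Mathlib

open scoped BigOperators
open MeasureTheory Real Set

lemma aux_sin_sum (x θ : ℝ) (hx0 : 0 < x) (hx1 : x < 1) (hθ0 : 0 < θ) (hθπ : θ < Real.pi) :
    HasSum (fun k : ℕ => Real.sin (((k : ℝ) + 1) * θ) * x ^ (k + 1) / ((k : ℝ) + 1))
        (-(1 - (x : ℂ) * Complex.exp ((θ : ℂ) * Complex.I)).arg) ∧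
      0 < -(1 - (x : ℂ) * Complex.exp ((θ : ℂ) * Complex.I)).arg ∧
      -(1 - (x : ℂ) * Complex.exp ((θ : ℂ) * Complex.I)).arg ≤ x / (1 - x) := by
  set z : ℂ := (x : ℂ) * Complex.exp ((θ : ℂ) * Complex.I) with hz
  have hznorm : ‖z‖ < 1 := by
    rw [hz, norm_mul,
      Complex.norm_exp_ofReal_mul_I, Complex.norm_real, Real.norm_eq_abs, abs_of_pos hx0, mul_one]
    exact hx1
  have h := Complex.hasSum_taylorSeries_neg_log hznorm
  have him := Complex.hasSum_im h
  have hval : (-Complex.log (1 - z)).im = -(1 - z).arg := by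
    rw [Complex.neg_im, Complex.log_im]
  rw [hval] at him
  have hterm : ∀ n : ℕ, (z ^ n / (n : ℂ)).im = Real.sin ((n : ℝ) * θ) * x ^ n / (n : ℝ) := by
    intro n
    rcases n with _ | m
    · simp
    · set n := m + 1
      have hne : (n : ℝ) ≠ 0 := by positivity
      have h1 : z ^ n / (n : ℂ) = ((x ^ n / (n : ℝ) : ℝ) : ℂ) *
          Complex.exp (((n : ℝ) * θ : ℝ) * Complex.I) := by
        rw [hz, mul_pow, ← Complex.exp_nat_mul]
        push_cast
        field_simp
      rw [h1, Complex.mul_im, Complex.ofReal_re, Complex.ofReal_im,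
        Complex.exp_ofReal_mul_I_im, zero_mul, add_zero]
      ring
  simp only [hterm] at him
  have hshift : HasSum (fun k : ℕ =>
      Real.sin (((k : ℝ) + 1) * θ) * x ^ (k + 1) / ((k : ℝ) + 1)) (-(1 - z).arg) := by
    have := (hasSum_nat_add_iff' (f := fun n : ℕ => Real.sin ((n : ℝ) * θ) * x ^ n / (n : ℝ)) 1).mpr him
    simp only [Finset.range_one, Finset.sum_singleton, Nat.cast_zero, zero_mul,
      Real.sin_zero, pow_zero, div_zero, mul_zero, zero_div, sub_zero] at this
    refine this.congr_fun fun k => ?_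
    push_cast
    ring_nf
  refine ⟨hshift, ?_, ?_⟩
  · have him0 : (1 - z).im < 0 := by
      have : z.im = x * Real.sin θ := by
        rw [hz, Complex.mul_im, Complex.ofReal_re, Complex.ofReal_im,
          Complex.exp_ofReal_mul_I_im, zero_mul, add_zero]
      have hs := Real.sin_pos_of_pos_of_lt_pi hθ0 hθπ
      simp only [Complex.sub_im, Complex.one_im, this]
      nlinarith
    have := Complex.arg_neg_iff.mpr him0
    linarith
  · have hsummg : Summable (fun k : ℕ => x ^ (k + 1)) := by
      have := (summable_geometric_of_lt_one hx0.le hx1).mul_left x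
      refine this.congr fun k => ?_
      rw [pow_succ]; ring
    have htsumg : ∑' k : ℕ, x ^ (k + 1) = x / (1 - x) := by
      have : ∑' k : ℕ, x * x ^ k = x * (1 - x)⁻¹ := by
        rw [tsum_mul_left, tsum_geometric_of_lt_one hx0.le hx1]
      rw [div_eq_mul_inv, ← this]
      exact tsum_congr fun k => by rw [pow_succ]; ring
    have hle : ∀ k : ℕ, Real.sin (((k : ℝ) + 1) * θ) * x ^ (k + 1) / ((k : ℝ) + 1) ≤ x ^ (k + 1) := by
      intro k
      have hk1 : (0 : ℝ) < (k : ℝ) + 1 := by positivity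
      have hxp : (0 : ℝ) < x ^ (k + 1) := by positivity
      have h1 : Real.sin (((k : ℝ) + 1) * θ) * x ^ (k + 1) ≤ x ^ (k + 1) := by
        nlinarith [Real.sin_le_one (((k : ℝ) + 1) * θ)]
      calc Real.sin (((k : ℝ) + 1) * θ) * x ^ (k + 1) / ((k : ℝ) + 1)
          ≤ x ^ (k + 1) / ((k : ℝ) + 1) := by
            gcongr
        _ ≤ x ^ (k + 1) := by
            exact div_le_self hxp.le (by linarith)
    calc -(1 - z).arg = ∑' k : ℕ, Real.sin (((k : ℝ) + 1) * θ) * x ^ (k + 1) / ((k : ℝ) + 1) :=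
          hshift.tsum_eq.symm
      _ ≤ ∑' k : ℕ, x ^ (k + 1) := Summable.tsum_le_tsum hle hshift.summable hsummg
      _ = x / (1 - x) := htsumg

/-- Under the assumptions (\ref{thmassump}) of the paper, the series
`Σ_{k≥1} (1/k)·sin(πk/N)·∫₀^{λₙ} (−f(t))^{k/N} dt/t` converges absolutely and its sum
is strictly positive (the nonvanishing assertion of Theorem 4.2). -/
theorem stmt5 (N n : ℕ) (hN : 2 ≤ N) (hn : 1 ≤ n)
    (lam : Fin n → ℂ) (hne : ∀ i, lam i ≠ 0) (hinj : Function.Injective lam)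
    (f : ℝ → ℝ) (hf : ∀ t : ℝ, (f t : ℂ) = (t : ℂ) * ∏ i, ((t : ℂ) - lam i))
    (ln : ℝ) (hlam : lam ⟨n - 1, by omega⟩ = (ln : ℂ)) (hln0 : 0 < ln) (hln1 : ln < 1)
    (hother : ∀ i : Fin n, i ≠ ⟨n - 1, by omega⟩ →
      ∀ r : ℝ, lam i = (r : ℂ) → ¬(0 < r ∧ r < 1))
    (hbound : ∀ t : ℝ, 0 ≤ t → t < 1 → |f t| < 1) (hf1 : 0 < f 1)
    (c : ℝ) (hc0 : 0 < c) (hc : (c : ℂ) = (-1 : ℂ) ^ (n - 1) * ∏ i, lam i) :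
    Summable (fun k : ℕ =>
      |(1 / ((k : ℝ) + 1)) * Real.sin (Real.pi * ((k : ℝ) + 1) / (N : ℝ)) *
        ∫ t in Set.Ioo 0 ln, (-f t) ^ (((k : ℝ) + 1) / (N : ℝ)) / t|) ∧
    0 < ∑' k : ℕ,
      (1 / ((k : ℝ) + 1)) * Real.sin (Real.pi * ((k : ℝ) + 1) / (N : ℝ)) *
        ∫ t in Set.Ioo 0 ln, (-f t) ^ (((k : ℝ) + 1) / (N : ℝ)) / t := by
  -- basic setup
  have hNpos : (0 : ℝ) < (N : ℝ) := by
    have : (0 : ℕ) < N := by omega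
    exact_mod_cast this
  set P : ℝ → ℂ := fun t => ∏ i, ((t : ℂ) - lam i) with hP
  set g : ℝ → ℝ := fun t => (P t).re with hg
  have hPcont : Continuous P := by
    exact continuous_finset_prod _ fun i _ => Complex.continuous_ofReal.sub continuous_const
  have hgcont : Continuous g := Complex.continuous_re.comp hPcont
  have hfg : ∀ t, f t = t * g t := by
    intro t
    have h1 : f t = ((t : ℂ) * P t).re := by rw [← hf t, Complex.ofReal_re]
    rw [h1, Complex.mul_re, Complex.ofReal_re, Complex.ofReal_im]
    simp [hg]
  have hfcont : Continuous f := by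
    have : f = fun t => t * g t := funext hfg
    rw [this]; exact continuous_id.mul hgcont
  -- g 0 = -c
  have hprodlam : (∏ i, lam i) = ((-1 : ℂ)) ^ (n - 1) * (c : ℂ) := by
    have h1 : ((-1 : ℂ)) ^ (n - 1) * ((-1 : ℂ)) ^ (n - 1) = 1 := by
      rw [← pow_add]
      exact Even.neg_one_pow ⟨n - 1, by ring⟩
    calc (∏ i, lam i) = ((-1 : ℂ)) ^ (n - 1) * ((-1 : ℂ)) ^ (n - 1) * ∏ i, lam i := by
          rw [h1, one_mul]
      _ = ((-1 : ℂ)) ^ (n - 1) * (c : ℂ) := by rw [mul_assoc, ← hc]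
  have hg0 : g 0 = -c := by
    have h0 : P 0 = ((-1 : ℂ)) ^ n * ∏ i, lam i := by
      rw [hP]
      simp only [Complex.ofReal_zero, zero_sub]
      rw [show (∏ i : Fin n, -lam i) = ∏ i : Fin n, (-1 : ℂ) * lam i by
        exact Finset.prod_congr rfl fun i _ => by ring]
      rw [Finset.prod_mul_distrib, Finset.prod_const, Finset.card_univ, Fintype.card_fin]
    have h2 : ((-1 : ℂ)) ^ n * ((-1 : ℂ)) ^ (n - 1) = -1 := by
      rw [← pow_add]
      have h3 : n + (n - 1) = 2 * (n - 1) + 1 := by omega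
      rw [h3, pow_succ, pow_mul]
      simp
    have : P 0 = ((-c : ℝ) : ℂ) := by
      rw [h0, hprodlam, ← mul_assoc, h2]
      push_cast; ring
    show (P 0).re = -c
    rw [this, Complex.ofReal_re]
  -- f is nonzero on (0, ln)
  have hfne : ∀ t ∈ Ioo (0 : ℝ) ln, f t ≠ 0 := by
    intro t ht h0
    have h1 : (t : ℂ) * P t = 0 := by
      rw [← hf t, h0, Complex.ofReal_zero]
    rcases mul_eq_zero.mp h1 with h2 | h2
    · exact ht.1.ne' (by exact_mod_cast h2)
    · obtain ⟨i, _, hi⟩ := Finset.prod_eq_zero_iff.mp h2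
      have hit : lam i = (t : ℂ) := by linear_combination -hi
      by_cases hilast : i = ⟨n - 1, by omega⟩
      · rw [hilast, hlam] at hit
        have : ln = t := by exact_mod_cast hit
        exact absurd this.symm ht.2.ne
      · exact hother i hilast t hit ⟨ht.1, ht.2.trans hln1⟩
  -- g < 0 on [0, ln)
  have hgneg : ∀ t, 0 ≤ t → t < ln → g t < 0 := by
    intro t ht0 htln
    by_contra hge
    push_neg at hge
    have h00 : (0 : ℝ) ∈ Icc (g 0) (g t) := ⟨by rw [hg0]; linarith, hge⟩
    obtain ⟨s, hs, hgs⟩ := intermediate_value_Icc ht0 hgcont.continuousOn h00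
    rcases eq_or_lt_of_le hs.1 with h | h
    · rw [← h] at hgs; rw [hg0] at hgs; linarith
    · have hsIoo : s ∈ Ioo (0 : ℝ) ln := ⟨h, lt_of_le_of_lt hs.2 htln⟩
      exact hfne s hsIoo (by rw [hfg s, hgs, mul_zero])
  have hfneg : ∀ t ∈ Ioo (0 : ℝ) ln, f t < 0 := by
    intro t ht
    rw [hfg t]
    exact mul_neg_of_pos_of_neg ht.1 (hgneg t ht.1.le ht.2)
  have hflt1 : ∀ t ∈ Icc (0 : ℝ) ln, -f t < 1 := by
    intro t ht
    have := hbound t ht.1 (lt_of_le_of_lt ht.2 hln1)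
    have := neg_abs_le (f t)
    linarith [abs_nonneg (f t), (abs_lt.mp (hbound t ht.1 (lt_of_le_of_lt ht.2 hln1))).1]
  have hfln : f ln = 0 := by
    have h1 : (f ln : ℂ) = 0 := by
      rw [hf ln]
      have : ((ln : ℂ) - lam ⟨n - 1, by omega⟩) = 0 := by rw [hlam, sub_self]
      have h2 : (∏ i : Fin n, ((ln : ℂ) - lam i)) = 0 :=
        Finset.prod_eq_zero (Finset.mem_univ (⟨n - 1, by omega⟩ : Fin n)) this
      rw [h2, mul_zero]
    exact_mod_cast h1
  -- M : sup of -f on [0, ln]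
  obtain ⟨t₀, ht₀, hMmax⟩ := isCompact_Icc.exists_isMaxOn
    (⟨0, le_refl 0, hln0.le⟩ : (Icc (0 : ℝ) ln).Nonempty) hfcont.neg.continuousOn
  set M : ℝ := -f t₀ with hMdef
  have hM : ∀ t ∈ Icc (0 : ℝ) ln, -f t ≤ M := fun t ht => hMmax ht
  have hM0 : 0 ≤ M := by
    have := hM ln ⟨hln0.le, le_refl ln⟩
    rw [hfln] at this; simpa using this
  have hM1 : M < 1 := hflt1 t₀ ht₀
  -- C : sup of -g on [0, ln]
  obtain ⟨t₁, ht₁, hCmax⟩ := isCompact_Icc.exists_isMaxOn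
    (⟨0, le_refl 0, hln0.le⟩ : (Icc (0 : ℝ) ln).Nonempty) hgcont.neg.continuousOn
  set C : ℝ := -g t₁ with hCdef
  have hC : ∀ t ∈ Icc (0 : ℝ) ln, -g t ≤ C := fun t ht => hCmax ht
  have hC0 : 0 < C := by
    have := hC 0 ⟨le_refl 0, hln0.le⟩
    rw [hg0] at this; linarith
  have hCf : ∀ t ∈ Ioo (0 : ℝ) ln, -f t ≤ C * t := by
    intro t ht
    have := hC t ⟨ht.1.le, ht.2.le⟩
    rw [hfg t]
    nlinarith [ht.1]
  -- integrability of (-f t)^ρ / t on (0, ln)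
  have hint : ∀ ρ : ℝ, 0 < ρ →
      IntegrableOn (fun t => (-f t) ^ ρ / t) (Ioo (0 : ℝ) ln) volume := by
    intro ρ hρ
    have hmeas : AEStronglyMeasurable (fun t => (-f t) ^ ρ / t)
        (volume.restrict (Ioo (0 : ℝ) ln)) := by
      exact (((Real.continuous_rpow_const hρ.le).comp hfcont.neg).measurable.div
        measurable_id).aestronglyMeasurable
    have hdom : IntegrableOn (fun t => C ^ ρ * t ^ (ρ - 1)) (Ioo (0 : ℝ) ln) volume :=
      ((intervalIntegral.integrableOn_Ioo_rpow_iff hln0).mpr (by linarith)).const_mul _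
    refine Integrable.mono' hdom hmeas ?_
    rw [ae_restrict_iff' measurableSet_Ioo]
    refine ae_of_all _ fun t ht => ?_
    have hft : 0 < -f t := by linarith [hfneg t ht]
    have h1 : (-f t) ^ ρ ≤ (C * t) ^ ρ := Real.rpow_le_rpow hft.le (hCf t ht) hρ.le
    have h2 : (C * t) ^ ρ = C ^ ρ * t ^ ρ := Real.mul_rpow hC0.le ht.1.le
    have h3 : t ^ (ρ - 1) = t ^ ρ / t := by
      rw [Real.rpow_sub ht.1, Real.rpow_one]
    rw [Real.norm_eq_abs, abs_of_nonneg (div_nonneg (Real.rpow_nonneg hft.le ρ) ht.1.le), h3,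
      mul_div_assoc']
    exact div_le_div₀ (mul_nonneg (Real.rpow_nonneg hC0.le _) (Real.rpow_nonneg ht.1.le _))
      (h2 ▸ h1) ht.1 le_rfl
  -- the base integral and geometric ratio
  set q : ℝ := M ^ ((1 : ℝ) / (N : ℝ)) with hqdef
  have hq0 : 0 ≤ q := Real.rpow_nonneg hM0 _
  have hq1 : q < 1 := Real.rpow_lt_one hM0 hM1 (by positivity)
  set J : ℝ := ∫ t in Ioo (0 : ℝ) ln, (-f t) ^ ((1 : ℝ) / (N : ℝ)) / t with hJdef
  have hintJ : IntegrableOn (fun t => (-f t) ^ ((1 : ℝ) / (N : ℝ)) / t) (Ioo (0 : ℝ) ln) volume :=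
    hint _ (by positivity)
  have hJ0 : 0 ≤ J := by
    refine setIntegral_nonneg measurableSet_Ioo fun t ht => ?_
    exact div_nonneg (Real.rpow_nonneg (by linarith [hfneg t ht]) _) ht.1.le
  -- pointwise bound for the k-th integrand
  have hptle : ∀ (k : ℕ) (t : ℝ), t ∈ Ioo (0 : ℝ) ln →
      (-f t) ^ (((k : ℝ) + 1) / (N : ℝ)) / t ≤ q ^ k * ((-f t) ^ ((1 : ℝ) / (N : ℝ)) / t) := by
    intro k t ht
    have hft : 0 < -f t := by linarith [hfneg t ht]
    have hsplit : (-f t) ^ (((k : ℝ) + 1) / (N : ℝ))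
        = (-f t) ^ ((k : ℝ) / (N : ℝ)) * (-f t) ^ ((1 : ℝ) / (N : ℝ)) := by
      rw [← Real.rpow_add hft]
      ring_nf
    have hqk : M ^ ((k : ℝ) / (N : ℝ)) = q ^ k := by
      rw [hqdef, ← Real.rpow_natCast (M ^ ((1 : ℝ) / (N : ℝ))) k, ← Real.rpow_mul hM0]
      congr 1
      ring
    have h1 : (-f t) ^ ((k : ℝ) / (N : ℝ)) ≤ q ^ k := by
      rw [← hqk]
      exact Real.rpow_le_rpow hft.le (hM t ⟨ht.1.le, ht.2.le⟩) (by positivity)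
    rw [hsplit, mul_div_assoc]
    exact mul_le_mul_of_nonneg_right h1
      (div_nonneg (Real.rpow_nonneg hft.le _) ht.1.le)
  -- integral bound
  have hIle : ∀ k : ℕ, (∫ t in Ioo (0 : ℝ) ln, (-f t) ^ (((k : ℝ) + 1) / (N : ℝ)) / t)
      ≤ q ^ k * J := by
    intro k
    have h1 : (∫ t in Ioo (0 : ℝ) ln, (-f t) ^ (((k : ℝ) + 1) / (N : ℝ)) / t)
        ≤ ∫ t in Ioo (0 : ℝ) ln, q ^ k * ((-f t) ^ ((1 : ℝ) / (N : ℝ)) / t) :=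
      setIntegral_mono_on (hint _ (by positivity)) (hintJ.const_mul _)
        measurableSet_Ioo (hptle k)
    rwa [MeasureTheory.integral_const_mul] at h1
  have hI0 : ∀ k : ℕ, 0 ≤ ∫ t in Ioo (0 : ℝ) ln, (-f t) ^ (((k : ℝ) + 1) / (N : ℝ)) / t := by
    intro k
    refine setIntegral_nonneg measurableSet_Ioo fun t ht => ?_
    exact div_nonneg (Real.rpow_nonneg (by linarith [hfneg t ht]) _) ht.1.le
  -- Part 1 : summability
  have part1 : Summable (fun k : ℕ =>
      |(1 / ((k : ℝ) + 1)) * Real.sin (Real.pi * ((k : ℝ) + 1) / (N : ℝ)) *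
        ∫ t in Set.Ioo 0 ln, (-f t) ^ (((k : ℝ) + 1) / (N : ℝ)) / t|) := by
    refine Summable.of_nonneg_of_le (fun k => abs_nonneg _) (fun k => ?_)
      (((summable_geometric_of_lt_one hq0 hq1).mul_right J))
    have hck : |(1 / ((k : ℝ) + 1)) * Real.sin (Real.pi * ((k : ℝ) + 1) / (N : ℝ))| ≤ 1 := by
      rw [abs_mul]
      have h1 : |1 / ((k : ℝ) + 1)| ≤ 1 := by
        rw [abs_of_nonneg (by positivity)]
        rw [div_le_one (by positivity)]
        linarith [Nat.cast_nonneg (α := ℝ) k]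
      have h2 : |Real.sin (Real.pi * ((k : ℝ) + 1) / (N : ℝ))| ≤ 1 := Real.abs_sin_le_one _
      calc |1 / ((k : ℝ) + 1)| * |Real.sin (Real.pi * ((k : ℝ) + 1) / (N : ℝ))|
          ≤ 1 * 1 := mul_le_mul h1 h2 (abs_nonneg _) zero_le_one
        _ = 1 := one_mul 1
    rw [abs_mul, abs_of_nonneg (hI0 k)]
    calc |(1 / ((k : ℝ) + 1)) * Real.sin (Real.pi * ((k : ℝ) + 1) / (N : ℝ))| *
          (∫ t in Set.Ioo 0 ln, (-f t) ^ (((k : ℝ) + 1) / (N : ℝ)) / t)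
        ≤ 1 * (q ^ k * J) := mul_le_mul hck (hIle k) (hI0 k) zero_le_one
      _ = q ^ k * J := one_mul _
  refine ⟨part1, ?_⟩
  -- Part 2 : positivity
  set θ : ℝ := Real.pi / (N : ℝ) with hθdef
  have hθ0 : 0 < θ := by rw [hθdef]; positivity
  have hθπ : θ < Real.pi := by
    rw [hθdef]
    have h1 : (1 : ℝ) < (N : ℝ) := by exact_mod_cast (by omega : 1 < N)
    exact div_lt_self Real.pi_pos h1
  set Fk : ℕ → ℝ → ℝ := fun k t =>
    (1 / ((k : ℝ) + 1) * Real.sin (Real.pi * ((k : ℝ) + 1) / (N : ℝ))) *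
      ((-f t) ^ (((k : ℝ) + 1) / (N : ℝ)) / t) with hFk
  have hFkint : ∀ k, IntegrableOn (Fk k) (Ioo (0 : ℝ) ln) volume := fun k =>
    (hint _ (by positivity)).const_mul _
  have hFkmeas : ∀ k, AEStronglyMeasurable (Fk k) (volume.restrict (Ioo (0 : ℝ) ln)) :=
    fun k => (hFkint k).aestronglyMeasurable
  have hck : ∀ k : ℕ, |1 / ((k : ℝ) + 1) * Real.sin (Real.pi * ((k : ℝ) + 1) / (N : ℝ))| ≤ 1 := by
    intro k
    rw [abs_mul]
    have h1 : |1 / ((k : ℝ) + 1)| ≤ 1 := by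
      rw [abs_of_nonneg (by positivity), div_le_one (by positivity)]
      linarith [Nat.cast_nonneg (α := ℝ) k]
    have h2 : |Real.sin (Real.pi * ((k : ℝ) + 1) / (N : ℝ))| ≤ 1 := Real.abs_sin_le_one _
    calc |1 / ((k : ℝ) + 1)| * |Real.sin (Real.pi * ((k : ℝ) + 1) / (N : ℝ))|
        ≤ 1 * 1 := mul_le_mul h1 h2 (abs_nonneg _) zero_le_one
      _ = 1 := one_mul 1
  have hnormle : ∀ k : ℕ, (∫ t in Ioo (0 : ℝ) ln, ‖Fk k t‖) ≤ q ^ k * J := by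
    intro k
    have h1 : (∫ t in Ioo (0 : ℝ) ln, ‖Fk k t‖)
        ≤ ∫ t in Ioo (0 : ℝ) ln, q ^ k * ((-f t) ^ ((1 : ℝ) / (N : ℝ)) / t) := by
      refine setIntegral_mono_on (hFkint k).norm (hintJ.const_mul _) measurableSet_Ioo ?_
      intro t ht
      have hbase : 0 ≤ (-f t) ^ (((k : ℝ) + 1) / (N : ℝ)) / t :=
        div_nonneg (Real.rpow_nonneg (by linarith [hfneg t ht]) _) ht.1.le
      calc ‖Fk k t‖
          = |1 / ((k : ℝ) + 1) * Real.sin (Real.pi * ((k : ℝ) + 1) / (N : ℝ))| *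
            ((-f t) ^ (((k : ℝ) + 1) / (N : ℝ)) / t) := by
            rw [hFk, Real.norm_eq_abs, abs_mul, abs_of_nonneg hbase]
        _ ≤ 1 * ((-f t) ^ (((k : ℝ) + 1) / (N : ℝ)) / t) :=
            mul_le_mul_of_nonneg_right (hck k) hbase
        _ = (-f t) ^ (((k : ℝ) + 1) / (N : ℝ)) / t := one_mul _
        _ ≤ q ^ k * ((-f t) ^ ((1 : ℝ) / (N : ℝ)) / t) := hptle k t ht
    rwa [MeasureTheory.integral_const_mul] at h1
  have htot : (∑' k : ℕ, ∫⁻ t, ‖Fk k t‖₊ ∂(volume.restrict (Ioo (0 : ℝ) ln))) ≠ ⊤ := by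
    have heq : ∀ k : ℕ, (∫⁻ t, ‖Fk k t‖₊ ∂(volume.restrict (Ioo (0 : ℝ) ln)))
        = ENNReal.ofReal (∫ t in Ioo (0 : ℝ) ln, ‖Fk k t‖) := fun k =>
      (MeasureTheory.ofReal_integral_norm_eq_lintegral_enorm (hFkint k)).symm
    have hgeo : Summable (fun k : ℕ => q ^ k * J) :=
      (summable_geometric_of_lt_one hq0 hq1).mul_right J
    have hle2 : (∑' k : ℕ, ∫⁻ t, ‖Fk k t‖₊ ∂(volume.restrict (Ioo (0 : ℝ) ln)))
        ≤ ∑' k : ℕ, ENNReal.ofReal (q ^ k * J) := by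
      refine ENNReal.tsum_le_tsum fun k => ?_
      rw [heq k]
      exact ENNReal.ofReal_le_ofReal (hnormle k)
    have hfin : (∑' k : ℕ, ENNReal.ofReal (q ^ k * J)) ≠ ⊤ := by
      rw [← ENNReal.ofReal_tsum_of_nonneg (fun k => mul_nonneg (pow_nonneg hq0 k) hJ0) hgeo]
      exact ENNReal.ofReal_ne_top
    exact ne_top_of_le_ne_top hfin hle2
  have hswap := MeasureTheory.integral_tsum (fun k => hFkmeas k) htot
  have hterm : ∀ k : ℕ, (1 / ((k : ℝ) + 1)) * Real.sin (Real.pi * ((k : ℝ) + 1) / (N : ℝ)) *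
      (∫ t in Set.Ioo 0 ln, (-f t) ^ (((k : ℝ) + 1) / (N : ℝ)) / t)
      = ∫ t in Ioo (0 : ℝ) ln, Fk k t := by
    intro k
    rw [hFk]
    exact (MeasureTheory.integral_const_mul _ _).symm
  simp only [hterm]
  rw [← hswap]
  -- pointwise description of the summed integrand
  set H : ℝ → ℝ := fun t =>
    (1 / t) * (-(1 - (((-f t) ^ ((1 : ℝ) / (N : ℝ)) : ℝ) : ℂ) *
      Complex.exp ((θ : ℂ) * Complex.I)).arg) with hH
  have hkey : ∀ t ∈ Ioo (0 : ℝ) ln,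
      HasSum (fun k => Fk k t) (H t) ∧ 0 < H t ∧
      H t ≤ (1 / t) * (((-f t) ^ ((1 : ℝ) / (N : ℝ))) /
        (1 - (-f t) ^ ((1 : ℝ) / (N : ℝ)))) := by
    intro t ht
    have hft : 0 < -f t := by linarith [hfneg t ht]
    have hft1 : -f t < 1 := hflt1 t ⟨ht.1.le, ht.2.le⟩
    have hx0 : 0 < (-f t) ^ ((1 : ℝ) / (N : ℝ)) := Real.rpow_pos_of_pos hft _
    have hx1 : (-f t) ^ ((1 : ℝ) / (N : ℝ)) < 1 := Real.rpow_lt_one hft.le hft1 (by positivity)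
    obtain ⟨hsum, hpos, hle⟩ := aux_sin_sum ((-f t) ^ ((1 : ℝ) / (N : ℝ))) θ hx0 hx1 hθ0 hθπ
    have hxk : ∀ k : ℕ, (-f t) ^ (((k : ℝ) + 1) / (N : ℝ))
        = ((-f t) ^ ((1 : ℝ) / (N : ℝ))) ^ (k + 1) := by
      intro k
      rw [← Real.rpow_natCast ((-f t) ^ ((1 : ℝ) / (N : ℝ))) (k + 1),
        ← Real.rpow_mul hft.le]
      congr 1
      push_cast
      ring
    have hFkt : (fun k : ℕ => Fk k t) = fun k : ℕ =>
        (1 / t) * (Real.sin (((k : ℝ) + 1) * θ) *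
          ((-f t) ^ ((1 : ℝ) / (N : ℝ))) ^ (k + 1) / ((k : ℝ) + 1)) := by
      funext k
      rw [hFk]
      simp only []
      rw [hxk k, hθdef,
        show Real.pi * ((k : ℝ) + 1) / (N : ℝ) = ((k : ℝ) + 1) * (Real.pi / (N : ℝ)) by ring]
      ring
    refine ⟨?_, ?_, ?_⟩
    · rw [hFkt, hH]
      exact hsum.mul_left _
    · rw [hH]
      simp only []
      exact mul_pos (one_div_pos.mpr ht.1) hpos
    · rw [hH]
      simp only []
      exact mul_le_mul_of_nonneg_left hle (one_div_pos.mpr ht.1).le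
  -- integrability of the summed integrand
  have hxmeas : Measurable fun t : ℝ => (-f t) ^ ((1 : ℝ) / (N : ℝ)) :=
    ((Real.continuous_rpow_const (by positivity)).comp hfcont.neg).measurable
  have hHmeas : Measurable H := by
    rw [hH]
    refine Measurable.mul (measurable_const.div measurable_id) (Measurable.neg ?_)
    exact Complex.measurable_arg.comp
      (measurable_const.sub ((Complex.measurable_ofReal.comp hxmeas).mul_const _))
  have h1q : 0 < 1 - q := by linarith
  have hHint : IntegrableOn H (Ioo (0 : ℝ) ln) volume := by
    have hdom : IntegrableOn
        (fun t => (C ^ ((1 : ℝ) / (N : ℝ)) / (1 - q)) * t ^ ((1 : ℝ) / (N : ℝ) - 1))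
        (Ioo (0 : ℝ) ln) volume := by
      refine ((intervalIntegral.integrableOn_Ioo_rpow_iff hln0).mpr ?_).const_mul _
      have : (0 : ℝ) < (1 : ℝ) / (N : ℝ) := by positivity
      linarith
    refine Integrable.mono' hdom hHmeas.aestronglyMeasurable ?_
    rw [ae_restrict_iff' measurableSet_Ioo]
    refine ae_of_all _ fun t ht => ?_
    obtain ⟨hsum, hpos, hle⟩ := hkey t ht
    have hft : 0 < -f t := by linarith [hfneg t ht]
    have hx0 : 0 < (-f t) ^ ((1 : ℝ) / (N : ℝ)) := Real.rpow_pos_of_pos hft _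
    have hxq : (-f t) ^ ((1 : ℝ) / (N : ℝ)) ≤ q :=
      Real.rpow_le_rpow hft.le (hM t ⟨ht.1.le, ht.2.le⟩) (by positivity)
    have hxC : (-f t) ^ ((1 : ℝ) / (N : ℝ))
        ≤ C ^ ((1 : ℝ) / (N : ℝ)) * t ^ ((1 : ℝ) / (N : ℝ)) := by
      rw [← Real.mul_rpow hC0.le ht.1.le]
      exact Real.rpow_le_rpow hft.le (hCf t ht) (by positivity)
    rw [Real.norm_eq_abs, abs_of_pos hpos]
    calc H t ≤ (1 / t) * (((-f t) ^ ((1 : ℝ) / (N : ℝ))) /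
          (1 - (-f t) ^ ((1 : ℝ) / (N : ℝ)))) := hle
      _ ≤ (1 / t) * ((C ^ ((1 : ℝ) / (N : ℝ)) * t ^ ((1 : ℝ) / (N : ℝ))) / (1 - q)) := by
          refine mul_le_mul_of_nonneg_left ?_ (one_div_pos.mpr ht.1).le
          refine div_le_div₀ (mul_nonneg (Real.rpow_nonneg hC0.le _)
            (Real.rpow_nonneg ht.1.le _)) hxC h1q (by linarith)
      _ = (C ^ ((1 : ℝ) / (N : ℝ)) / (1 - q)) * t ^ ((1 : ℝ) / (N : ℝ) - 1) := by
          rw [Real.rpow_sub ht.1, Real.rpow_one]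
          field_simp
  have hGeq : EqOn H (fun t => ∑' k, Fk k t) (Ioo (0 : ℝ) ln) := fun t ht =>
    ((hkey t ht).1.tsum_eq).symm
  have hGint : IntegrableOn (fun t => ∑' k, Fk k t) (Ioo (0 : ℝ) ln) volume :=
    hHint.congr_fun hGeq measurableSet_Ioo
  have hnn : 0 ≤ᵐ[volume.restrict (Ioo (0 : ℝ) ln)] fun t => ∑' k, Fk k t := by
    rw [Filter.EventuallyLE, ae_restrict_iff' measurableSet_Ioo]
    refine ae_of_all _ fun t ht => ?_
    simp only [Pi.zero_apply]
    rw [(hkey t ht).1.tsum_eq]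
    exact (hkey t ht).2.1.le
  rw [setIntegral_pos_iff_support_of_nonneg_ae hnn hGint]
  have hsub : Ioo (0 : ℝ) ln ⊆
      Function.support (fun t => ∑' k, Fk k t) ∩ Ioo (0 : ℝ) ln := by
    intro t ht
    refine ⟨?_, ht⟩
    simp only [Function.mem_support]
    rw [(hkey t ht).1.tsum_eq]
    exact ((hkey t ht).2.1).ne'
  calc (0 : ENNReal) < volume (Ioo (0 : ℝ) ln) := by
        rw [Real.volume_Ioo]
        simp only [sub_zero]
        exact ENNReal.ofReal_pos.mpr hln0
    _ ≤ volume (Function.support (fun t => ∑' k, Fk k t) ∩ Ioo (0 : ℝ) ln) :=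
        measure_mono hsub
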